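/- Let M be a rank r matroid without coloops whose independence complex has h-vector (h_0,...,h_r). Then for all 1 ≤ j < i ≤ r, h_{i-j}(M) ≤ [C(n-i+j-1, r-i+j) / C(n-i-1, r-i)]·h_i(M), with equality if and only if every series class of M has cardinality greater than r-i+j. -/

import Mathlib

open Polynomial

variable {α : Type*}

/-- The rank of a set `A` in a matroid `M`: the largest cardinality of an independent
subset of `A`. -/
noncomputable def mr (M : Matroid α) (A : Set α) : ℕ :=
  sSup {n | ∃ I, M.Indep I ∧ I ⊆ A ∧ I.ncard = n}

/-- `mf M j` is the number of independent sets of `M` of cardinality `j`, i.e. the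
number of faces of cardinality `j` of the independence complex of `M`. -/
noncomputable def mf (M : Matroid α) (j : ℕ) : ℕ :=
  {I : Set α | M.Indep I ∧ I.ncard = j}.ncard

/-- The `h`-vector of the independence complex of a rank-`r` matroid `M`:
`h_i = ∑_{j=0}^i (-1)^{i-j} C(r-j, r-i) f_j`. -/
noncomputable def mh (M : Matroid α) (r i : ℕ) : ℤ :=
  ∑ j ∈ Finset.range (i + 1), (-1 : ℤ) ^ (i - j) * ((r - j).choose (r - i) : ℤ) * (mf M j : ℤ)

/-- Binomial coefficient `C(a,b)` for integers, with the convention that it is `0`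
whenever `b < 0` or `b > a`. -/
def ch (a b : ℤ) : ℤ := if 0 ≤ b ∧ b ≤ a then (a.toNat.choose b.toNat : ℤ) else 0

/-- `e` is a loop of `M`. -/
def mLoop (M : Matroid α) (e : α) : Prop := e ∈ M.closure ∅

/-- `e` is a coloop of `M`, i.e. a loop of the dual matroid. -/
def mColoop (M : Matroid α) (e : α) : Prop := e ∈ M✶.closure ∅

/-- `M` is connected: it is not the direct sum of two smaller matroids; equivalently,
`r(A) + r(E \ A) ≠ r(E)` for every proper nonempty subset `A` of the ground set. -/
def mConnected (M : Matroid α) : Prop :=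
  M.E.Nonempty ∧ ∀ A ⊆ M.E, A.Nonempty → (M.E \ A).Nonempty →
    mr M A + mr M (M.E \ A) ≠ mr M M.E

/-- The deletion `M - D`. -/
noncomputable def mdel (M : Matroid α) (D : Set α) : Matroid α := M.restrict (M.E \ D)

/-- The contraction `M / C`, defined as the dual of the deletion of `C` in the dual. -/
noncomputable def mcon (M : Matroid α) (C : Set α) : Matroid α := (mdel M✶ C)✶

/-- `P` is a parallel class of `M`: the set of all non-loop elements parallel to some
fixed non-loop element `e`. -/
def mParClass (M : Matroid α) (P : Set α) : Prop :=
  ∃ e ∈ M.E, ¬ mLoop M e ∧ P = {f | f ∈ M.E ∧ ¬ mLoop M f ∧ f ∈ M.closure {e}}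

/-- `S` is a series class of `M`: a parallel class of the dual matroid. -/
def mSerClass (M : Matroid α) (S : Set α) : Prop := mParClass M✶ S

/-- `T(M; x, 0)`: the Tutte polynomial of `M` (with ground set the whole fintype)
evaluated at `y = 0`, so that `T(M;x,0) = ∑_i b_i(M) x^i`. -/
noncomputable def bpoly [Fintype α] [DecidableEq α] (M : Matroid α) : Polynomial ℤ :=
  ∑ A : Finset α,
    (X - 1) ^ (mr M Set.univ - mr M (A : Set α)) *
      C ((-1 : ℤ) ^ (A.card - mr M (A : Set α)))

/-- Two elements of the ground set lie in the same connected component iff no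
separator (a set `A` with `r(A) + r(E \ A) = r(E)`) splits them. -/
def crel (M : Matroid α) (e f : α) : Prop :=
  e ∈ M.E ∧ f ∈ M.E ∧
    ∀ A ⊆ M.E, mr M A + mr M (M.E \ A) = mr M M.E → (e ∈ A ↔ f ∈ A)

/-- The number of connected components of `M`. -/
noncomputable def numComponents (M : Matroid α) : ℕ :=
  {S : Set α | ∃ e ∈ M.E, S = {f | crel M e f}}.ncard

namespace Work

open Set Matroid Finset


open Set Matroid

lemma mr_eq_of {M : Matroid α} {I A : Set α} (h1 : M.Indep I) (h2 : I ⊆ A)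
    (h3 : ∀ J, M.Indep J → J ⊆ A → J.ncard ≤ I.ncard) : mr M A = I.ncard := by
  have hmem : I.ncard ∈ {n | ∃ J, M.Indep J ∧ J ⊆ A ∧ J.ncard = n} := ⟨I, h1, h2, rfl⟩
  have hub : ∀ n ∈ {n | ∃ J, M.Indep J ∧ J ⊆ A ∧ J.ncard = n}, n ≤ I.ncard := by
    rintro n ⟨J, hJ, hJA, rfl⟩; exact h3 J hJ hJA
  exact le_antisymm (csSup_le ⟨_, hmem⟩ hub) (le_csSup ⟨_, hub⟩ hmem)

lemma indep_ncard_le_of_base {M : Matroid α} {J B : Set α} [Finite α]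
    (hJ : M.Indep J) (hB : M.IsBase B) : J.ncard ≤ B.ncard := by
  obtain ⟨B', hB', hJB'⟩ := hJ.exists_isBase_superset
  calc J.ncard ≤ B'.ncard := Set.ncard_le_ncard hJB' B'.toFinite
    _ = B.ncard := hB'.ncard_eq_ncard_of_isBase hB

lemma mr_ground_eq {M : Matroid α} {B : Set α} [Finite α] (hB : M.IsBase B) :
    mr M M.E = B.ncard :=
  mr_eq_of hB.indep hB.subset_ground fun J hJ _ => indep_ncard_le_of_base hJ hB

open Set Matroid

def mLoop' (M : Matroid α) (e : α) : Prop := e ∈ M.closure ∅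

lemma mLoop_iff {M : Matroid α} {e : α} : (e ∈ M.closure ∅) ↔ e ∈ M.E ∧ ¬ M.Indep {e} := by
  rw [M.empty_indep.mem_closure_iff']
  simp

lemma mColoop_iff {M : Matroid α} {e : α} :
    (e ∈ M✶.closure ∅) ↔ e ∈ M.E ∧ ∀ B, M.IsBase B → e ∈ B := by
  rw [mLoop_iff, dual_ground]
  constructor
  · rintro ⟨he, h⟩
    refine ⟨he, fun B hB => ?_⟩
    by_contra heB
    exact h ((dual_indep_iff_exists (by simpa using he)).2 ⟨B, hB, by simpa using heB⟩)
  · rintro ⟨he, h⟩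
    refine ⟨he, fun hind => ?_⟩
    obtain ⟨B, hB, hdisj⟩ := (dual_indep_iff_exists (by simpa using he)).1 hind
    exact (by simpa using hdisj : e ∉ B) (h B hB)

lemma coloop_mem_base {M : Matroid α} {e : α} {B : Set α} (h : e ∈ M✶.closure ∅)
    (hB : M.IsBase B) : e ∈ B := (mColoop_iff.1 h).2 B hB

/-- A coloop is not a loop (it is independent as a singleton). -/
lemma coloop_indep {M : Matroid α} {e : α} (h : e ∈ M✶.closure ∅) : M.Indep {e} := by
  obtain ⟨B, hB⟩ := M.exists_isBase
  exact hB.indep.subset (by simpa using coloop_mem_base h hB)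

/-- If `e` is not a coloop but is in the ground set, there is a base avoiding it;
    in fact for any `e`, failure of coloopness gives a base avoiding `e`. -/
lemma exists_base_not_mem {M : Matroid α} {e : α} (he : e ∈ M.E) (h : ¬ e ∈ M✶.closure ∅) :
    ∃ B, M.IsBase B ∧ e ∉ B := by
  rw [mColoop_iff] at h
  push_neg at h
  exact h he

lemma nonloop_exists_base_mem {M : Matroid α} {e : α} (he : M.Indep {e}) :
    ∃ B, M.IsBase B ∧ e ∈ B := by
  obtain ⟨B, hB, hsub⟩ := he.exists_isBase_superset
  exact ⟨B, hB, hsub rfl⟩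

lemma indep_base_of_ncard [Finite α] {M : Matroid α} {I : Set α}
    (hI : M.Indep I) (hcard : I.ncard = mr M M.E) : M.IsBase I := by
  obtain ⟨B, hB, hIB⟩ := hI.exists_isBase_superset
  have : I = B := Set.eq_of_subset_of_ncard_le hIB (by rw [hcard, mr_ground_eq hB]) B.toFinite
  rwa [this]

open Set Matroid

@[simp] lemma mdel_ground (M : Matroid α) (D : Set α) : (mdel M D).E = M.E \ D := rfl

@[simp] lemma mcon_ground (M : Matroid α) (C : Set α) : (mcon M C).E = M.E \ C := rfl

lemma mdel_indep_iff {M : Matroid α} {e : α} {I : Set α} :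
    (mdel M {e}).Indep I ↔ M.Indep I ∧ e ∉ I := by
  rw [mdel, restrict_indep_iff]
  constructor
  · rintro ⟨h1, h2⟩; exact ⟨h1, fun he => (h2 he).2 rfl⟩
  · rintro ⟨h1, h2⟩
    exact ⟨h1, subset_diff.2 ⟨h1.subset_ground, by simpa using h2⟩⟩

lemma mdel_base_of [Finite α] {M : Matroid α} {e : α} {B : Set α}
    (hB : M.IsBase B) (heB : e ∉ B) : (mdel M {e}).IsBase B := by
  have hBi : (mdel M {e}).Indep B := mdel_indep_iff.2 ⟨hB.indep, heB⟩
  obtain ⟨B'', hB'', hsub⟩ := hBi.exists_isBase_superset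
  have hB''M : M.Indep B'' := (mdel_indep_iff.1 hB''.indep).1
  have : B = B'' :=
    Set.eq_of_subset_of_ncard_le hsub (indep_ncard_le_of_base hB''M hB) B''.toFinite
  rwa [this]

lemma mdel_base_iff [Finite α] {M : Matroid α} {e : α} {B : Set α}
    (he : e ∈ M.E) (hne : ¬ e ∈ M✶.closure ∅) :
    (mdel M {e}).IsBase B ↔ M.IsBase B ∧ e ∉ B := by
  constructor
  · intro hB
    obtain ⟨B0, hB0, heB0⟩ := exists_base_not_mem he hne
    have hB0del : (mdel M {e}).IsBase B0 := mdel_base_of hB0 heB0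
    have hcard : B.ncard = B0.ncard := hB.ncard_eq_ncard_of_isBase hB0del
    have hBM : M.Indep B := (mdel_indep_iff.1 hB.indep).1
    have heB : e ∉ B := (mdel_indep_iff.1 hB.indep).2
    exact ⟨indep_base_of_ncard hBM (by rw [hcard, mr_ground_eq hB0]), heB⟩
  · rintro ⟨hB, heB⟩; exact mdel_base_of hB heB

lemma mr_mdel_ground [Finite α] {M : Matroid α} {e : α}
    (he : e ∈ M.E) (hne : ¬ e ∈ M✶.closure ∅) :
    mr (mdel M {e}) ((mdel M {e}).E) = mr M M.E := by
  obtain ⟨B0, hB0, heB0⟩ := exists_base_not_mem he hne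
  rw [mr_ground_eq (M := mdel M {e}) (mdel_base_of hB0 heB0), mr_ground_eq hB0]

lemma mcon_indep_iff [Finite α] {M : Matroid α} {e : α} {I : Set α} (he : M.Indep {e}) :
    (mcon M {e}).Indep I ↔ e ∉ I ∧ M.Indep (insert e I) := by
  have heE : e ∈ M.E := he.subset_ground rfl
  have heE' : e ∈ M✶.E := by simpa using heE
  have hne : ¬ e ∈ M✶✶.closure ∅ := by
    rw [dual_dual, mLoop_iff]
    tauto
  have hMI : ∀ J : Set α, M.Indep J ↔ (J ⊆ M.E ∧ ∃ B, M✶.IsBase B ∧ Disjoint J B) := by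
    intro J
    conv_lhs => rw [← dual_dual M]
    rw [dual_indep_iff_exists']
    simp
  rw [mcon, dual_indep_iff_exists']
  constructor
  · rintro ⟨hIsub, B, hB, hdisj⟩
    rw [mdel_base_iff heE' hne] at hB
    have heI : e ∉ I := fun h => (hIsub h).2 rfl
    refine ⟨heI, (hMI _).2 ⟨?_, B, hB.1, ?_⟩⟩
    · exact insert_subset heE (fun x hx => (hIsub hx).1)
    · rw [Set.insert_eq, Set.disjoint_union_left]
      exact ⟨Set.disjoint_singleton_left.2 hB.2, hdisj⟩
  · rintro ⟨heI, hind⟩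
    obtain ⟨hsub, B, hB, hdisj⟩ := (hMI _).1 hind
    rw [Set.insert_eq, Set.disjoint_union_left] at hdisj
    rw [Set.disjoint_singleton_left] at hdisj
    refine ⟨?_, B, (mdel_base_iff heE' hne).2 ⟨hB, hdisj.1⟩, hdisj.2⟩
    rw [mdel_ground, dual_ground, subset_diff]
    exact ⟨(insert_subset_iff.1 hsub).2, by simpa using heI⟩

lemma mr_mcon_ground [Finite α] {M : Matroid α} {e : α} (he : M.Indep {e}) :
    mr (mcon M {e}) ((mcon M {e}).E) = mr M M.E - 1 := by
  obtain ⟨B, hB, heB⟩ := nonloop_exists_base_mem he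
  have hBd : insert e (B \ {e}) = B := by
    rw [Set.insert_diff_singleton, Set.insert_eq_of_mem heB]
  have hI : (mcon M {e}).Indep (B \ {e}) :=
    (mcon_indep_iff he).2 ⟨fun h => h.2 rfl, by rw [hBd]; exact hB.indep⟩
  have hcard : (B \ {e}).ncard = B.ncard - 1 := Set.ncard_diff_singleton_of_mem heB
  rw [mr_ground_eq hB] at *
  rw [mr_eq_of hI hI.subset_ground ?_, hcard]
  intro J hJ _
  obtain ⟨heJ, hind⟩ := (mcon_indep_iff he).1 hJ
  have := indep_ncard_le_of_base hind hB
  rw [Set.ncard_insert_of_notMem heJ J.toFinite] at this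
  omega

lemma mcon_coloop_iff {M : Matroid α} {e f : α} :
    f ∈ (mcon M {e})✶.closure ∅ ↔ f ∈ M✶.closure ∅ ∧ f ≠ e := by
  rw [mcon, dual_dual, mLoop_iff, mLoop_iff, mdel_ground, dual_ground]
  constructor
  · rintro ⟨⟨hf, hfe⟩, hni⟩
    simp only [Set.mem_singleton_iff] at hfe
    refine ⟨⟨by simpa using hf, fun hi => hni ?_⟩, hfe⟩
    rw [mdel_indep_iff]
    exact ⟨hi, by simpa using Ne.symm hfe⟩
  · rintro ⟨⟨hf, hni⟩, hfe⟩
    exact ⟨⟨by simpa using hf, by simpa using hfe⟩, fun hi => hni (mdel_indep_iff.1 hi).1⟩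

open Set Matroid

lemma mf_zero [Finite α] (M : Matroid α) : mf M 0 = 0 + 1 := by
  have : {I : Set α | M.Indep I ∧ I.ncard = 0} = {∅} := by
    ext I
    simp only [Set.mem_setOf_eq, Set.mem_singleton_iff]
    constructor
    · rintro ⟨hI, h0⟩
      exact (Set.ncard_eq_zero I.toFinite).1 h0
    · rintro rfl
      exact ⟨M.empty_indep, by simp⟩
  rw [mf, this]
  simp

lemma mf_eq_zero_of_rank_lt [Finite α] {M : Matroid α} {j : ℕ} (h : mr M M.E < j) :
    mf M j = 0 := by
  rw [mf, Set.ncard_eq_zero (Set.toFinite _)]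
  ext I
  simp only [Set.mem_setOf_eq, Set.mem_empty_iff_false, iff_false, not_and]
  intro hI hcard
  obtain ⟨B, hB⟩ := M.exists_isBase
  have := indep_ncard_le_of_base hI hB
  rw [hcard, ← mr_ground_eq hB] at this
  omega

lemma rank_le_ncard_ground [Finite α] (M : Matroid α) : mr M M.E ≤ M.E.ncard := by
  obtain ⟨B, hB⟩ := M.exists_isBase
  rw [mr_ground_eq hB]
  exact Set.ncard_le_ncard hB.subset_ground M.E.toFinite

lemma mf_mdel_eq {M : Matroid α} {e : α} {j : ℕ} :
    mf (mdel M {e}) j = {I : Set α | (M.Indep I ∧ I.ncard = j) ∧ e ∉ I}.ncard := by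
  rw [mf]
  congr 1
  ext I
  rw [Set.mem_setOf_eq, Set.mem_setOf_eq, mdel_indep_iff]
  tauto

lemma mf_mcon_eq [Finite α] {M : Matroid α} {e : α} {j : ℕ} (he : M.Indep {e}) :
    mf (mcon M {e}) j = {I : Set α | (M.Indep I ∧ I.ncard = j + 1) ∧ e ∈ I}.ncard := by
  rw [mf]
  have himg : {I : Set α | (M.Indep I ∧ I.ncard = j + 1) ∧ e ∈ I} =
      (fun K => insert e K) '' {I : Set α | (mcon M {e}).Indep I ∧ I.ncard = j} := by
    ext I
    simp only [Set.mem_image, Set.mem_setOf_eq]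
    constructor
    · rintro ⟨⟨hI, hcard⟩, heI⟩
      refine ⟨I \ {e}, ⟨(mcon_indep_iff he).2 ⟨fun h => h.2 rfl, ?_⟩, ?_⟩, ?_⟩
      · rwa [Set.insert_diff_singleton, Set.insert_eq_of_mem heI]
      · rw [Set.ncard_diff_singleton_of_mem heI, hcard]
        omega
      · rw [Set.insert_diff_singleton, Set.insert_eq_of_mem heI]
    · rintro ⟨K, ⟨hK, hcard⟩, rfl⟩
      obtain ⟨heK, hind⟩ := (mcon_indep_iff he).1 hK
      exact ⟨⟨hind, by rw [Set.ncard_insert_of_notMem heK K.toFinite, hcard]⟩,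
        Set.mem_insert _ _⟩
  rw [himg, Set.ncard_image_of_injOn]
  rintro K1 hK1 K2 hK2 hins
  simp only at hins
  have h1 : e ∉ K1 := ((mcon_indep_iff he).1 hK1.1).1
  have h2 : e ∉ K2 := ((mcon_indep_iff he).1 hK2.1).1
  have : insert e K1 \ {e} = insert e K2 \ {e} := by rw [hins]
  rwa [Set.insert_diff_self_of_notMem h1, Set.insert_diff_self_of_notMem h2] at this

lemma mf_rec [Finite α] {M : Matroid α} {e : α} {j : ℕ} (he : M.Indep {e}) :
    mf M (j + 1) = mf (mdel M {e}) (j + 1) + mf (mcon M {e}) j := by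
  rw [mf_mdel_eq, mf_mcon_eq he, mf]
  rw [← Set.ncard_union_eq ?disj (Set.toFinite _) (Set.toFinite _)]
  · congr 1
    ext I
    simp only [Set.mem_setOf_eq, Set.mem_union]
    tauto
  case disj =>
    rw [Set.disjoint_left]
    rintro I ⟨-, hI⟩ ⟨-, hI'⟩
    exact hI hI'

lemma coloop_insert_indep {M : Matroid α} {e : α} {I : Set α}
    (hcl : e ∈ M✶.closure ∅) (hI : M.Indep I) : M.Indep (insert e I) := by
  obtain ⟨B, hB, hIB⟩ := hI.exists_isBase_superset
  exact hB.indep.subset (insert_subset (coloop_mem_base hcl hB) hIB)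

lemma mf_mdel_eq_mcon_of_coloop [Finite α] {M : Matroid α} {e : α} {j : ℕ}
    (hcl : e ∈ M✶.closure ∅) :
    mf (mdel M {e}) j = mf (mcon M {e}) j := by
  have he : M.Indep {e} := coloop_indep hcl
  rw [mf_mdel_eq, mf]
  congr 1
  ext I
  simp only [Set.mem_setOf_eq, mcon_indep_iff he]
  constructor
  · rintro ⟨⟨hI, hcard⟩, heI⟩
    exact ⟨⟨heI, coloop_insert_indep hcl hI⟩, hcard⟩
  · rintro ⟨⟨heI, hind⟩, hcard⟩
    exact ⟨⟨hind.subset (Set.subset_insert _ _), hcard⟩, heI⟩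

lemma mf_count [Finite α] (M : Matroid α) (j : ℕ) :
    ∑ e ∈ M.E.toFinite.toFinset, mf (mdel M {e}) j = (M.E.ncard - j) * mf M j := by
  classical
  set S := {I : Set α | M.Indep I ∧ I.ncard = j} with hS
  set SF := S.toFinite.toFinset with hSF
  set EF := M.E.toFinite.toFinset with hEF
  have h1 : ∀ e, mf (mdel M {e}) j = (SF.filter (fun I => e ∉ I)).card := by
    intro e
    rw [mf_mdel_eq, ← Set.ncard_coe_finset]
    congr 1
    ext I
    simp only [Finset.coe_filter, Set.mem_setOf_eq, hSF, Set.Finite.mem_toFinset, hS]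
  calc ∑ e ∈ EF, mf (mdel M {e}) j
      = ∑ e ∈ EF, ∑ I ∈ SF, if e ∉ I then 1 else 0 := by
        simp_rw [h1, Finset.card_filter]
    _ = ∑ I ∈ SF, ∑ e ∈ EF, if e ∉ I then 1 else 0 := Finset.sum_comm
    _ = ∑ I ∈ SF, (M.E.ncard - j) := by
        apply Finset.sum_congr rfl
        intro I hI
        rw [hSF, Set.Finite.mem_toFinset] at hI
        obtain ⟨hind, hcard⟩ := hI
        rw [← Finset.card_filter]
        have hsub : I ⊆ M.E := hind.subset_ground
        have hpos : (EF.filter (fun e => ¬ e ∉ I)).card = j := by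
          have : EF.filter (fun e => ¬ e ∉ I) = I.toFinite.toFinset := by
            ext x
            simp only [Finset.mem_filter, hEF, Set.Finite.mem_toFinset, not_not]
            exact ⟨fun h => h.2, fun h => ⟨hsub h, h⟩⟩
          rw [this, ← Set.ncard_eq_toFinset_card _ I.toFinite, hcard]
        have htot := Finset.card_filter_add_card_filter_not
          (s := EF) (p := fun e => e ∉ I)
        have hEcard : EF.card = M.E.ncard := (Set.ncard_eq_toFinset_card _ M.E.toFinite).symm
        omega
    _ = (M.E.ncard - j) * mf M j := by
        rw [Finset.sum_const, smul_eq_mul, mul_comm]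
        congr 1
        rw [mf, ← hS, hSF]
        exact (Set.ncard_eq_toFinset_card S S.toFinite).symm

open Finset

/-- The generic h-transform. -/
noncomputable def H (g : ℕ → ℤ) (ρ k : ℕ) : ℤ :=
  ∑ j ∈ Finset.range (k + 1), (-1 : ℤ) ^ (k - j) * ((ρ - j).choose (ρ - k) : ℤ) * g j

lemma H_zero (g : ℕ → ℤ) (ρ : ℕ) : H g ρ 0 = g 0 := by
  simp [H]

lemma H_add {f a b : ℕ → ℤ} (h : ∀ j, f j = a j + b j) (ρ k : ℕ) :
    H f ρ k = H a ρ k + H b ρ k := by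
  rw [H, H, H, ← Finset.sum_add_distrib]
  apply Finset.sum_congr rfl
  intro j _
  rw [h j]; ring

lemma H_shift (b : ℕ → ℤ) (ρ k : ℕ) (hk : 1 ≤ k) (hkρ : k ≤ ρ) :
    H (fun j => if j = 0 then 0 else b (j - 1)) ρ k = H b (ρ - 1) (k - 1) := by
  obtain ⟨k', rfl⟩ : ∃ k', k = k' + 1 := ⟨k - 1, by omega⟩
  rw [H, H, Finset.sum_range_succ']
  simp only [Nat.add_sub_cancel]
  simp only [if_true, mul_zero, add_zero]
  apply Finset.sum_congr rfl
  intro j hj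
  rw [Finset.mem_range] at hj
  have e1 : k' + 1 - (j+1) = k' - j := by omega
  have e2 : ρ - (j+1) = ρ - 1 - j := by omega
  have e3 : ρ - 1 - k' = ρ - (k'+1) := by omega
  rw [e1, e2, e3]
  simp

lemma H_cone (a : ℕ → ℤ) (ρ k : ℕ) (hk : 1 ≤ k) (hkρ : k ≤ ρ - 1) (hρ : 1 ≤ ρ) :
    H a (ρ - 1) k = H a ρ k + H a (ρ - 1) (k - 1) := by
  obtain ⟨k', rfl⟩ : ∃ k', k = k' + 1 := ⟨k - 1, by omega⟩
  have hk2 : k' + 2 ≤ ρ := by omega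
  simp only [Nat.add_sub_cancel]
  have hsecond : (∑ j ∈ Finset.range (k' + 2),
      (-1:ℤ)^(k'-j) * (((ρ-1-j).choose (ρ-1-k') : ℕ) : ℤ) * a j) = H a (ρ - 1) k' := by
    rw [Finset.sum_range_succ]
    have hz : ((ρ-1-(k'+1)).choose (ρ-1-k') : ℤ) = 0 := by
      rw [Nat.choose_eq_zero_of_lt (by omega)]; simp
    rw [hz, H]
    ring
  rw [← hsecond, H, H, ← Finset.sum_add_distrib]
  apply Finset.sum_congr rfl
  intro j hj
  rw [Finset.mem_range] at hj
  rcases eq_or_lt_of_le (Nat.lt_succ_iff.1 hj) with rfl | hjk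
  · have hz : ((ρ-1-(k'+1)).choose (ρ-1-k') : ℤ) = 0 := by
      rw [Nat.choose_eq_zero_of_lt (by omega)]; simp
    simp only [Nat.sub_self, pow_zero, Nat.choose_self, Nat.cast_one, one_mul, hz]
    ring
  · have hsign : (-1 : ℤ) ^ (k' + 1 - j) = -(-1 : ℤ) ^ (k' - j) := by
      have : k' + 1 - j = (k' - j) + 1 := by omega
      rw [this, pow_succ]; ring
    have hpascal : (((ρ - j).choose (ρ - (k'+1)) : ℕ) : ℤ) =
        (((ρ-1-j).choose (ρ-1-(k'+1)) : ℕ) : ℤ) + (((ρ-1-j).choose (ρ-1-k') : ℕ) : ℤ) := by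
      have h1 : ρ - j = (ρ - 1 - j) + 1 := by omega
      have h2 : ρ - (k'+1) = (ρ - 1 - (k'+1)) + 1 := by omega
      have h3 : ρ - 1 - k' = (ρ - 1 - (k'+1)) + 1 := by omega
      rw [h1, h2, h3, Nat.choose_succ_succ]
      push_cast
      ring
    rw [hsign, hpascal]
    ring

lemma H_top_telescope (f a : ℕ → ℤ)
    (h : ∀ j, f j = a j + (if j = 0 then 0 else a (j - 1))) (ρ : ℕ) :
    H f ρ ρ = a ρ := by
  rcases Nat.eq_zero_or_pos ρ with rfl | hρ
  · rw [H_zero, h 0]; simp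
  · rw [H_add h ρ ρ, H_shift a ρ ρ hρ le_rfl]
    obtain ⟨m, rfl⟩ : ∃ m, ρ = m + 1 := ⟨ρ - 1, by omega⟩
    simp only [Nat.add_sub_cancel]
    rw [H, H]
    have c1 : ∀ j : ℕ, (-1:ℤ)^(m+1-j) * (((m+1-j).choose (m+1-(m+1)) : ℕ) : ℤ) * a j
        = (-1:ℤ)^(m+1-j) * a j := by
      intro j; rw [Nat.sub_self, Nat.choose_zero_right]; push_cast; ring
    have c2 : ∀ j : ℕ, (-1:ℤ)^(m-j) * (((m-j).choose (m-m) : ℕ) : ℤ) * a j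
        = (-1:ℤ)^(m-j) * a j := by
      intro j; rw [Nat.sub_self, Nat.choose_zero_right]; push_cast; ring
    rw [Finset.sum_congr rfl (fun j _ => c1 j), Finset.sum_congr rfl (fun j _ => c2 j),
      Finset.sum_range_succ]
    have hneg : ∀ j ∈ Finset.range (m+1), (-1:ℤ)^(m+1-j) * a j = -((-1:ℤ)^(m-j) * a j) := by
      intro j hj
      rw [Finset.mem_range] at hj
      have e : m + 1 - j = (m - j) + 1 := by omega
      rw [e, pow_succ]; ring
    rw [Finset.sum_congr rfl hneg, Nat.sub_self, pow_zero, one_mul, Finset.sum_neg_distrib]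
    ring

lemma H_count (g : ℕ → ℤ) (n ρ k : ℕ) (hk : 1 ≤ k) (hkρ : k ≤ ρ) :
    ∑ j ∈ Finset.range (k + 1),
        (-1 : ℤ) ^ (k - j) * ((ρ - j).choose (ρ - k) : ℤ) * (((n : ℤ) - j) * g j) =
      ((n : ℤ) - k) * H g ρ k - ((ρ : ℤ) - k + 1) * H g ρ (k - 1) := by
  obtain ⟨k', rfl⟩ : ∃ k', k = k' + 1 := ⟨k - 1, by omega⟩
  simp only [Nat.add_sub_cancel]
  have hsecond : (∑ j ∈ Finset.range (k' + 2),
      (-1:ℤ)^(k'-j) * (((ρ-j).choose (ρ-k') : ℕ) : ℤ) * g j) = H g ρ k' := by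
    rw [Finset.sum_range_succ]
    have hz : ((ρ-(k'+1)).choose (ρ-k') : ℤ) = 0 := by
      rw [Nat.choose_eq_zero_of_lt (by omega)]; simp
    rw [hz, H]
    ring
  rw [← hsecond, H, Finset.mul_sum, Finset.mul_sum, ← Finset.sum_sub_distrib]
  apply Finset.sum_congr rfl
  intro j hj
  rw [Finset.mem_range] at hj
  rcases eq_or_lt_of_le (Nat.lt_succ_iff.1 hj) with rfl | hjk
  · have hz : ((ρ-(k'+1)).choose (ρ-k') : ℤ) = 0 := by
      rw [Nat.choose_eq_zero_of_lt (by omega)]; simp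
    rw [hz]
    push_cast
    ring
  · have hsign : (-1 : ℤ) ^ (k' + 1 - j) = -(-1 : ℤ) ^ (k' - j) := by
      have : k' + 1 - j = (k' - j) + 1 := by omega
      rw [this, pow_succ]; ring
    have hkey : ((k':ℤ) + 1 - j) * (((ρ - j).choose (ρ - (k'+1)) : ℕ) : ℤ) =
        ((ρ : ℤ) - (k'+1) + 1) * (((ρ - j).choose (ρ - k') : ℕ) : ℤ) := by
      have hnat := Nat.choose_succ_right_eq (ρ - j) (ρ - (k'+1))
      have e0 : ρ - (k'+1) + 1 = ρ - k' := by omega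
      have e1 : ρ - j - (ρ - (k'+1)) = k' + 1 - j := by omega
      rw [e0, e1] at hnat
      have hcast := congrArg (Nat.cast : ℕ → ℤ) hnat
      push_cast at hcast
      have e2 : ((k' + 1 - j : ℕ) : ℤ) = (k' : ℤ) + 1 - j := by omega
      have e4 : ((ρ - k' : ℕ) : ℤ) = (ρ : ℤ) - k' := by omega
      rw [e2, e4] at hcast
      linear_combination (-1 : ℤ) * hcast
    rw [hsign]
    push_cast
    linear_combination (-((-1:ℤ)^(k'-j)) * g j) * hkey

open Set Matroid

lemma mh_eq_H (M : Matroid α) (r i : ℕ) : mh M r i = H (fun j => (mf M j : ℤ)) r i := rfl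

lemma exists_nonloop [Finite α] {M : Matroid α} (h : 1 ≤ mr M M.E) : ∃ e, M.Indep {e} := by
  by_contra hno
  push_neg at hno
  have h0 : mr M M.E = (∅ : Set α).ncard := by
    apply mr_eq_of M.empty_indep (Set.empty_subset _)
    intro J hJ _
    rcases J.eq_empty_or_nonempty with rfl | ⟨x, hx⟩
    · simp
    · exact absurd (hJ.subset (by simpa using hx)) (hno x)
  rw [h0] at h
  simp at h

lemma f_rel_noncoloop [Finite α] {M : Matroid α} {e : α} (he : M.Indep {e}) :
    ∀ j, (mf M j : ℤ) =
      (mf (mdel M {e}) j : ℤ) + (if j = 0 then 0 else ((mf (mcon M {e}) (j - 1) : ℕ) : ℤ)) := by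
  intro j
  rcases j with _ | j'
  · simp only [if_pos rfl]
    rw [mf_zero, mf_zero]
    simp
  · rw [if_neg (by omega), mf_rec he]
    push_cast
    simp

lemma f_rel_coloop [Finite α] {M : Matroid α} {e : α} (hcl : e ∈ M✶.closure ∅) :
    ∀ j, (mf M j : ℤ) =
      (mf (mcon M {e}) j : ℤ) + (if j = 0 then 0 else ((mf (mcon M {e}) (j - 1) : ℕ) : ℤ)) := by
  intro j
  have := f_rel_noncoloop (coloop_indep hcl) (M := M) (e := e) j
  rwa [mf_mdel_eq_mcon_of_coloop hcl] at this

lemma mh_cone [Finite α] {M : Matroid α} {e : α} (hcl : e ∈ M✶.closure ∅) {k : ℕ}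
    (hk : k ≤ mr M M.E - 1) :
    mh M (mr M M.E) k = mh (mcon M {e}) (mr M M.E - 1) k := by
  rcases Nat.eq_zero_or_pos k with rfl | hk1
  · show H _ _ 0 = H _ _ 0
    rw [H_zero, H_zero, mf_zero, mf_zero]
  · have hρ : 1 ≤ mr M M.E := by omega
    set a : ℕ → ℤ := fun j => ((mf (mcon M {e}) j : ℕ) : ℤ) with ha
    have hrel : ∀ j, ((mf M j : ℕ) : ℤ) = a j + (if j = 0 then 0 else a (j - 1)) :=
      f_rel_coloop hcl
    calc mh M (mr M M.E) k
        = H a (mr M M.E) k + H (fun j => if j = 0 then 0 else a (j - 1)) (mr M M.E) k :=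
          H_add hrel _ _
      _ = H a (mr M M.E) k + H a (mr M M.E - 1) (k - 1) := by
          rw [H_shift a _ _ hk1 (by omega)]
      _ = H a (mr M M.E - 1) k := (H_cone a _ _ hk1 hk hρ).symm
      _ = mh (mcon M {e}) (mr M M.E - 1) k := rfl

lemma mh_top [Finite α] {M : Matroid α} {e : α} (hcl : e ∈ M✶.closure ∅) :
    mh M (mr M M.E) (mr M M.E) = ((mf (mcon M {e}) (mr M M.E) : ℕ) : ℤ) :=
  H_top_telescope _ _ (f_rel_coloop hcl) _

lemma mh_split [Finite α] {M : Matroid α} {e : α} (he : M.Indep {e}) {k : ℕ}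
    (hk1 : 1 ≤ k) (hk : k ≤ mr M M.E) :
    mh M (mr M M.E) k =
      mh (mdel M {e}) (mr M M.E) k + mh (mcon M {e}) (mr M M.E - 1) (k - 1) := by
  set a : ℕ → ℤ := fun j => ((mf (mdel M {e}) j : ℕ) : ℤ) with ha
  set b : ℕ → ℤ := fun j => ((mf (mcon M {e}) j : ℕ) : ℤ) with hb
  have hrel : ∀ j, ((mf M j : ℕ) : ℤ) = a j + (if j = 0 then 0 else b (j - 1)) :=
    f_rel_noncoloop he
  calc mh M (mr M M.E) k
      = H a (mr M M.E) k + H (fun j => if j = 0 then 0 else b (j - 1)) (mr M M.E) k :=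
        H_add hrel _ _
    _ = H a (mr M M.E) k + H b (mr M M.E - 1) (k - 1) := by
        rw [H_shift b _ _ hk1 hk]
    _ = mh (mdel M {e}) (mr M M.E) k + mh (mcon M {e}) (mr M M.E - 1) (k - 1) := rfl

lemma ncard_ground_del [Finite α] {M : Matroid α} {e : α} (he : e ∈ M.E) :
    (mdel M {e}).E.ncard = M.E.ncard - 1 := by
  rw [mdel_ground]
  exact Set.ncard_diff_singleton_of_mem he

lemma ncard_ground_con [Finite α] {M : Matroid α} {e : α} (he : e ∈ M.E) :
    (mcon M {e}).E.ncard = M.E.ncard - 1 := by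
  rw [mcon_ground]
  exact Set.ncard_diff_singleton_of_mem he

lemma ncard_ground_pos [Finite α] {M : Matroid α} {e : α} (he : e ∈ M.E) :
    1 ≤ M.E.ncard := by
  have : ({e} : Set α).ncard ≤ M.E.ncard :=
    Set.ncard_le_ncard (by simpa using he) M.E.toFinite
  simpa using this

theorem mh_nonneg_aux [Finite α] :
    ∀ (n : ℕ) (M : Matroid α), M.E.ncard = n →
      ∀ k, k ≤ mr M M.E → 0 ≤ mh M (mr M M.E) k := by
  intro n
  induction n using Nat.strong_induction_on with
  | _ n IH =>
  intro M hn k hk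
  rcases Nat.eq_zero_or_pos k with rfl | hk1
  · rw [mh_eq_H, H_zero]
    positivity
  have hρ : 1 ≤ mr M M.E := le_trans hk1 hk
  obtain ⟨e, he⟩ := exists_nonloop hρ
  have heE : e ∈ M.E := he.subset_ground rfl
  have hnpos : 1 ≤ M.E.ncard := ncard_ground_pos heE
  by_cases hcl : e ∈ M✶.closure ∅
  · rcases eq_or_lt_of_le hk with rfl | hklt
    · rw [mh_top hcl]
      positivity
    · rw [mh_cone hcl (by omega)]
      have hrN : mr (mcon M {e}) (mcon M {e}).E = mr M M.E - 1 := mr_mcon_ground he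
      rw [← hrN]
      exact IH (n - 1) (by omega) _ (by rw [ncard_ground_con heE, hn]) k (by omega)
  · have h1 := mh_split he hk1 hk
    have hr1 : mr (mdel M {e}) (mdel M {e}).E = mr M M.E := mr_mdel_ground heE hcl
    have hr2 : mr (mcon M {e}) (mcon M {e}).E = mr M M.E - 1 := mr_mcon_ground he
    have t1 : 0 ≤ mh (mdel M {e}) (mr M M.E) k := by
      rw [← hr1]
      exact IH (n - 1) (by omega) _ (by rw [ncard_ground_del heE, hn]) k (by omega)
    have t2 : 0 ≤ mh (mcon M {e}) (mr M M.E - 1) (k - 1) := by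
      rw [← hr2]
      exact IH (n - 1) (by omega) _ (by rw [ncard_ground_con heE, hn]) (k - 1) (by omega)
    omega

theorem mh_pos_aux [Finite α] :
    ∀ (n : ℕ) (M : Matroid α), M.E.ncard = n → (∀ f, f ∉ M✶.closure ∅) →
      ∀ k, k ≤ mr M M.E → 1 ≤ mh M (mr M M.E) k := by
  intro n
  induction n using Nat.strong_induction_on with
  | _ n IH =>
  intro M hn hfree k hk
  rcases Nat.eq_zero_or_pos k with rfl | hk1
  · rw [mh_eq_H, H_zero, mf_zero]
    simp
  have hρ : 1 ≤ mr M M.E := le_trans hk1 hk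
  obtain ⟨e, he⟩ := exists_nonloop hρ
  have heE : e ∈ M.E := he.subset_ground rfl
  have hnpos : 1 ≤ M.E.ncard := ncard_ground_pos heE
  have h1 := mh_split he hk1 hk
  have hr1 : mr (mdel M {e}) (mdel M {e}).E = mr M M.E := mr_mdel_ground heE (hfree e)
  have hr2 : mr (mcon M {e}) (mcon M {e}).E = mr M M.E - 1 := mr_mcon_ground he
  have t1 : 0 ≤ mh (mdel M {e}) (mr M M.E) k := by
    rw [← hr1]
    exact mh_nonneg_aux _ _ rfl k (by omega)
  have t2 : 1 ≤ mh (mcon M {e}) (mr M M.E - 1) (k - 1) := by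
    rw [← hr2]
    refine IH (n - 1) (by omega) _ (by rw [ncard_ground_con heE, hn]) ?_ (k - 1) (by omega)
    intro f hf
    rw [mcon_coloop_iff] at hf
    exact hfree f hf.1
  omega

lemma coloops_ncard_le [Finite α] (M : Matroid α) :
    (M✶.closure ∅).ncard ≤ mr M M.E := by
  obtain ⟨B, hB⟩ := M.exists_isBase
  rw [mr_ground_eq hB]
  exact Set.ncard_le_ncard (fun f hf => coloop_mem_base hf hB) B.toFinite

theorem mh_vanish_aux [Finite α] :
    ∀ (n : ℕ) (M : Matroid α), M.E.ncard = n →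
      ∀ k, k ≤ mr M M.E →
        (1 ≤ mh M (mr M M.E) k ↔ k + (M✶.closure ∅).ncard ≤ mr M M.E) := by
  intro n
  induction n using Nat.strong_induction_on with
  | _ n IH =>
  intro M hn k hk
  rcases Nat.eq_zero_or_pos ((M✶.closure ∅).ncard) with hc | hc
  · have hfree : ∀ f, f ∉ M✶.closure ∅ := by
      intro f hf
      rw [Set.ncard_eq_zero (Set.toFinite _)] at hc
      rw [hc] at hf
      exact hf
    simp only [hc, add_zero]
    exact ⟨fun _ => hk, fun _ => mh_pos_aux _ _ rfl hfree k hk⟩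
  · obtain ⟨e, hcl⟩ := Set.nonempty_of_ncard_ne_zero (s := M✶.closure ∅) (by omega)
    have he : M.Indep {e} := coloop_indep hcl
    have heE : e ∈ M.E := he.subset_ground rfl
    have hnpos : 1 ≤ M.E.ncard := ncard_ground_pos heE
    have hρ : 1 ≤ mr M M.E := by
      have := coloops_ncard_le M
      omega
    have hrN : mr (mcon M {e}) (mcon M {e}).E = mr M M.E - 1 := mr_mcon_ground he
    have hcolN : ((mcon M {e})✶.closure ∅) = (M✶.closure ∅) \ {e} := by
      ext f
      rw [mcon_coloop_iff]
      simp only [Set.mem_diff, Set.mem_singleton_iff]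
    have hcN : ((mcon M {e})✶.closure ∅).ncard = (M✶.closure ∅).ncard - 1 := by
      rw [hcolN]
      exact Set.ncard_diff_singleton_of_mem hcl
    rcases eq_or_lt_of_le hk with rfl | hklt
    · rw [mh_top hcl]
      have : mf (mcon M {e}) (mr M M.E) = 0 := by
        apply mf_eq_zero_of_rank_lt
        rw [hrN]
        omega
      rw [this]
      constructor
      · intro h; norm_num at h
      · intro h; omega
    · rw [mh_cone hcl (by omega), ← hrN]
      rw [IH (n - 1) (by omega) _ (by rw [ncard_ground_con heE, hn]) k (by rw [hrN]; omega)]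
      rw [hrN, hcN]
      omega

open Set Matroid

lemma mem_dual_closure_singleton [Finite α] {M : Matroid α} {e f : α}
    (heE : e ∈ M.E) (hfE : f ∈ M.E) (hecl : ¬ e ∈ M✶.closure ∅) :
    f ∈ M✶.closure {e} ↔ (f = e ∨ ∀ B, M.IsBase B → e ∉ B → f ∈ B) := by
  have hei : M✶.Indep {e} := by
    by_contra hni
    exact hecl (mLoop_iff.2 ⟨heE, hni⟩)
  rcases eq_or_ne f e with rfl | hfe
  · simp only [eq_self_iff_true, true_or, iff_true]
    exact M✶.mem_closure_self f (by simpa using heE)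
  · rw [hei.mem_closure_iff_of_notMem (by simpa using hfe)]
    rw [dep_iff]
    have hsub : insert f {e} ⊆ M✶.E := by
      rw [Set.insert_subset_iff]
      constructor
      · simpa using hfE
      · simpa using heE
    rw [and_iff_left hsub]
    rw [dual_indep_iff_exists (by simpa using hsub)]
    constructor
    · intro hni
      right
      intro B hB heB
      by_contra hfB
      apply hni
      refine ⟨B, hB, ?_⟩
      rw [Set.disjoint_left]
      intro x hx
      rcases hx with rfl | hx
      · exact hfB
      · simp only [Set.mem_singleton_iff] at hx
        subst hx
        exact heB
    · rintro (rfl | h)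
      · exact absurd rfl hfe
      · rintro ⟨B, hB, hdisj⟩
        rw [Set.disjoint_left] at hdisj
        exact hdisj (Set.mem_insert _ _) (h B hB (fun heB => hdisj (by simp) heB))

lemma mdel_coloops_eq [Finite α] {M : Matroid α} {e : α}
    (hfree : ∀ f, ¬ f ∈ M✶.closure ∅) (heE : e ∈ M.E) :
    ((mdel M {e})✶.closure ∅) = {f | f ∈ M.E ∧ f ∈ M✶.closure {e}} \ {e} := by
  ext f
  rw [mColoop_iff]
  simp only [mdel_ground, Set.mem_diff, Set.mem_singleton_iff, Set.mem_setOf_eq]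
  constructor
  · rintro ⟨⟨hfE, hfe⟩, hall⟩
    refine ⟨⟨hfE, ?_⟩, hfe⟩
    rw [mem_dual_closure_singleton heE hfE (hfree e)]
    right
    intro B hB heB
    exact hall B ((mdel_base_iff heE (hfree e)).2 ⟨hB, heB⟩)
  · rintro ⟨⟨hfE, hcl⟩, hfe⟩
    rw [mem_dual_closure_singleton heE hfE (hfree e)] at hcl
    rcases hcl with rfl | hcl
    · exact absurd rfl hfe
    · refine ⟨⟨hfE, hfe⟩, fun B hB => ?_⟩
      rw [mdel_base_iff heE (hfree e)] at hB
      exact hcl B hB.1 hB.2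

lemma ncard_coloops_mdel [Finite α] {M : Matroid α} {e : α}
    (hfree : ∀ f, ¬ f ∈ M✶.closure ∅) (heE : e ∈ M.E) :
    ((mdel M {e})✶.closure ∅).ncard + 1 = {f | f ∈ M.E ∧ f ∈ M✶.closure {e}}.ncard := by
  rw [mdel_coloops_eq hfree heE]
  apply Set.ncard_diff_singleton_add_one
  · exact ⟨heE, M✶.mem_closure_self e (by simpa using heE)⟩
  · exact Set.toFinite _

lemma n_ge_r_succ [Finite α] {M : Matroid α}
    (hfree : ∀ f, ¬ f ∈ M✶.closure ∅) (hρ : 1 ≤ mr M M.E) :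
    mr M M.E + 1 ≤ M.E.ncard := by
  obtain ⟨B, hB⟩ := M.exists_isBase
  have hrn : mr M M.E ≤ M.E.ncard := rank_le_ncard_ground M
  by_contra hlt
  have heq : mr M M.E = M.E.ncard := by omega
  have hBE : B = M.E := by
    apply Set.eq_of_subset_of_ncard_le hB.subset_ground _ M.E.toFinite
    rw [← mr_ground_eq hB, heq]
  obtain ⟨f, hfB⟩ : B.Nonempty := by
    rw [← Set.ncard_pos B.toFinite, ← mr_ground_eq hB]
    omega
  apply hfree f
  rw [mColoop_iff]
  refine ⟨hB.subset_ground hfB, fun B' hB' => ?_⟩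
  have hBE' : B' = M.E := by
    apply Set.eq_of_subset_of_ncard_le hB'.subset_ground _ M.E.toFinite
    rw [← mr_ground_eq hB', heq]
  rw [hBE']
  exact hB.subset_ground hfB

lemma sum_mh_del [Finite α] (M : Matroid α) (k : ℕ) (hk1 : 1 ≤ k) (hkr : k ≤ mr M M.E) :
    ∑ e ∈ M.E.toFinite.toFinset, mh (mdel M {e}) (mr M M.E) k =
      ((M.E.ncard : ℤ) - k) * mh M (mr M M.E) k -
        ((mr M M.E : ℤ) - k + 1) * mh M (mr M M.E) (k - 1) := by
  have hrn : mr M M.E ≤ M.E.ncard := rank_le_ncard_ground M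
  have h1 : ∑ e ∈ M.E.toFinite.toFinset, mh (mdel M {e}) (mr M M.E) k =
      ∑ j ∈ Finset.range (k + 1),
        (-1 : ℤ) ^ (k - j) * ((mr M M.E - j).choose (mr M M.E - k) : ℤ) *
          (((M.E.ncard : ℤ) - j) * (mf M j : ℤ)) := by
    calc ∑ e ∈ M.E.toFinite.toFinset, mh (mdel M {e}) (mr M M.E) k
        = ∑ e ∈ M.E.toFinite.toFinset, ∑ j ∈ Finset.range (k + 1),
            (-1 : ℤ) ^ (k - j) * ((mr M M.E - j).choose (mr M M.E - k) : ℤ) *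
              ((mf (mdel M {e}) j : ℕ) : ℤ) := rfl
      _ = ∑ j ∈ Finset.range (k + 1), ∑ e ∈ M.E.toFinite.toFinset,
            (-1 : ℤ) ^ (k - j) * ((mr M M.E - j).choose (mr M M.E - k) : ℤ) *
              ((mf (mdel M {e}) j : ℕ) : ℤ) := Finset.sum_comm
      _ = ∑ j ∈ Finset.range (k + 1),
            (-1 : ℤ) ^ (k - j) * ((mr M M.E - j).choose (mr M M.E - k) : ℤ) *
              (((M.E.ncard : ℤ) - j) * (mf M j : ℤ)) := by
          apply Finset.sum_congr rfl
          intro j hj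
          have hsum : ∑ e ∈ M.E.toFinite.toFinset, ((mf (mdel M {e}) j : ℕ) : ℤ) =
              ((M.E.ncard : ℤ) - j) * (mf M j : ℤ) := by
            have hc := mf_count M j
            have hcast : ((∑ e ∈ M.E.toFinite.toFinset, mf (mdel M {e}) j : ℕ) : ℤ) =
                (((M.E.ncard - j) * mf M j : ℕ) : ℤ) := congrArg (Nat.cast : ℕ → ℤ) hc
            push_cast at hcast
            rw [hcast]
            rcases le_or_gt j M.E.ncard with hj' | hj'
            · congr 1
              omega
            · have hz : mf M j = 0 := mf_eq_zero_of_rank_lt (by omega)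
              rw [hz]
              ring
          rw [← hsum, Finset.mul_sum]
  rw [h1]
  exact H_count (fun j => (mf M j : ℤ)) M.E.ncard (mr M M.E) k hk1 hkr

open Set Matroid

lemma step_lemma [Finite α] (M : Matroid α) (hfree : ∀ f, ¬ f ∈ M✶.closure ∅)
    (k : ℕ) (hk1 : 1 ≤ k) (hkr : k ≤ mr M M.E) :
    (((mr M M.E : ℤ) - k + 1) * mh M (mr M M.E) (k - 1) ≤
        ((M.E.ncard : ℤ) - k) * mh M (mr M M.E) k) ∧
      ((((mr M M.E : ℤ) - k + 1) * mh M (mr M M.E) (k - 1) =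
          ((M.E.ncard : ℤ) - k) * mh M (mr M M.E) k) ↔
        ∀ e ∈ M.E, mr M M.E + 1 < k + {f | f ∈ M.E ∧ f ∈ M✶.closure {e}}.ncard) := by
  have hsum := sum_mh_del M k hk1 hkr
  have hterm : ∀ e ∈ M.E.toFinite.toFinset, 0 ≤ mh (mdel M {e}) (mr M M.E) k := by
    intro e he
    rw [Set.Finite.mem_toFinset] at he
    have hr1 : mr (mdel M {e}) (mdel M {e}).E = mr M M.E := mr_mdel_ground he (hfree e)
    rw [← hr1]
    exact mh_nonneg_aux _ _ rfl k (by rw [hr1]; exact hkr)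
  have hnn : 0 ≤ ∑ e ∈ M.E.toFinite.toFinset, mh (mdel M {e}) (mr M M.E) k :=
    Finset.sum_nonneg hterm
  constructor
  · linarith [hsum]
  · constructor
    · intro heq
      have hzero : ∑ e ∈ M.E.toFinite.toFinset, mh (mdel M {e}) (mr M M.E) k = 0 := by
        linarith [hsum]
      rw [Finset.sum_eq_zero_iff_of_nonneg hterm] at hzero
      intro e heE
      have he' : e ∈ M.E.toFinite.toFinset := by rwa [Set.Finite.mem_toFinset]
      have hz := hzero e he'
      have hr1 : mr (mdel M {e}) (mdel M {e}).E = mr M M.E := mr_mdel_ground heE (hfree e)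
      have hvan := mh_vanish_aux ((mdel M {e}).E.ncard) (mdel M {e}) rfl k
        (by rw [hr1]; exact hkr)
      rw [hr1] at hvan
      have hcard := ncard_coloops_mdel hfree heE
      have hnot : ¬ (1 ≤ mh (mdel M {e}) (mr M M.E) k) := by rw [hz]; norm_num
      rw [hvan] at hnot
      omega
    · intro hall
      have hzero : ∑ e ∈ M.E.toFinite.toFinset, mh (mdel M {e}) (mr M M.E) k = 0 := by
        rw [Finset.sum_eq_zero_iff_of_nonneg hterm]
        intro e he'
        rw [Set.Finite.mem_toFinset] at he'
        have hr1 : mr (mdel M {e}) (mdel M {e}).E = mr M M.E := mr_mdel_ground he' (hfree e)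
        have hvan := mh_vanish_aux ((mdel M {e}).E.ncard) (mdel M {e}) rfl k
          (by rw [hr1]; exact hkr)
        rw [hr1] at hvan
        have hcard := ncard_coloops_mdel hfree he'
        have h2 := hall e he'
        have h0 : 0 ≤ mh (mdel M {e}) (mr M M.E) k := hterm e (by rwa [Set.Finite.mem_toFinset])
        have : ¬ (1 ≤ mh (mdel M {e}) (mr M M.E) k) := by
          rw [hvan]
          omega
        omega
      linarith [hzero, hsum]

lemma combine {t u D N1 N2 h' h hi : ℚ} (hD : 0 < D) (ht : 0 < t) (hu : 0 < u)
    (hkey : t * N2 = u * N1) {C1 C2 : Prop}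
    (h1 : t * h' ≤ u * h) (h1e : t * h' = u * h ↔ C1)
    (h2 : D * h ≤ N1 * hi) (h2e : D * h = N1 * hi ↔ C2) :
    D * h' ≤ N2 * hi ∧ (D * h' = N2 * hi ↔ (C1 ∧ C2)) := by
  have e1 : t * (D * h') = D * (t * h') := by ring
  have e2 : D * (u * h) = u * (D * h) := by ring
  have e3 : u * (N1 * hi) = t * (N2 * hi) := by
    rw [← mul_assoc, ← hkey, mul_assoc]
  have le1 : D * (t * h') ≤ D * (u * h) := mul_le_mul_of_nonneg_left h1 hD.le
  have le2 : u * (D * h) ≤ u * (N1 * hi) := mul_le_mul_of_nonneg_left h2 hu.le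
  have hchain : t * (D * h') ≤ t * (N2 * hi) := by
    rw [e1]
    calc D * (t * h') ≤ D * (u * h) := le1
      _ = u * (D * h) := e2
      _ ≤ u * (N1 * hi) := le2
      _ = t * (N2 * hi) := e3
  have hle : D * h' ≤ N2 * hi := le_of_mul_le_mul_left hchain ht
  refine ⟨hle, ?_, ?_⟩
  · intro heq
    have hteq : t * (D * h') = t * (N2 * hi) := by rw [heq]
    have q1 : D * (t * h') = D * (u * h) := by
      refine le_antisymm le1 ?_
      calc D * (u * h) = u * (D * h) := e2
        _ ≤ u * (N1 * hi) := le2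
        _ = t * (N2 * hi) := e3
        _ = t * (D * h') := hteq.symm
        _ = D * (t * h') := e1
    have q2 : u * (D * h) = u * (N1 * hi) := by
      refine le_antisymm le2 ?_
      calc u * (N1 * hi) = t * (N2 * hi) := e3
        _ = t * (D * h') := hteq.symm
        _ = D * (t * h') := e1
        _ ≤ D * (u * h) := le1
        _ = u * (D * h) := e2
    exact ⟨h1e.1 (mul_left_cancel₀ hD.ne' q1), h2e.1 (mul_left_cancel₀ hu.ne' q2)⟩
  · rintro ⟨c1, c2⟩
    have q1 := h1e.2 c1
    have q2 := h2e.2 c2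
    have : t * (D * h') = t * (N2 * hi) := by rw [e1, q1, e2, q2, e3]
    exact mul_left_cancel₀ ht.ne' this

open Set Matroid

lemma cast_key (a b c d : ℕ) (h : a * b = c * d) :
    ((a : ℚ)) * b = (c : ℚ) * d := by exact_mod_cast h

lemma chain [Finite α] (M : Matroid α) (hfree : ∀ f, ¬ f ∈ M✶.closure ∅)
    (i : ℕ) (hir : i ≤ mr M M.E) :
    ∀ j, 1 ≤ j → j < i →
      ((((M.E.ncard - i - 1).choose (mr M M.E - i) : ℕ) : ℚ) *
            ((mh M (mr M M.E) (i - j) : ℤ) : ℚ) ≤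
          (((M.E.ncard - i + j - 1).choose (mr M M.E - i + j) : ℕ) : ℚ) *
            ((mh M (mr M M.E) i : ℤ) : ℚ)) ∧
        (((((M.E.ncard - i - 1).choose (mr M M.E - i) : ℕ) : ℚ) *
              ((mh M (mr M M.E) (i - j) : ℤ) : ℚ) =
            (((M.E.ncard - i + j - 1).choose (mr M M.E - i + j) : ℕ) : ℚ) *
              ((mh M (mr M M.E) i : ℤ) : ℚ)) ↔
          ∀ e ∈ M.E, mr M M.E + j < i + {f | f ∈ M.E ∧ f ∈ M✶.closure {e}}.ncard) := by
  set r := mr M M.E with hr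
  set n := M.E.ncard with hn
  intro j
  induction j with
  | zero => intro h; omega
  | succ j ih =>
  intro _ hji
  have hρ : 1 ≤ r := by omega
  have hnr : r + 1 ≤ n := n_ge_r_succ hfree hρ
  have hD : (0 : ℚ) < (((n - i - 1).choose (r - i) : ℕ) : ℚ) := by
    rw [Nat.cast_pos]
    exact Nat.choose_pos (by omega)
  rcases Nat.eq_zero_or_pos j with rfl | hj1
  · -- base case: j + 1 = 1, step at k = i
    simp only [Nat.zero_add]
    have hstep := step_lemma M hfree i (by omega) hir
    have hc1 : ((r : ℤ) - i + 1) = ((r - i + 1 : ℕ) : ℤ) := by omega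
    have hc2 : ((n : ℤ) - i) = ((n - i : ℕ) : ℤ) := by omega
    rw [hc1, hc2] at hstep
    have ht : (0 : ℚ) < ((r - i + 1 : ℕ) : ℚ) := by rw [Nat.cast_pos]; omega
    have hu : (0 : ℚ) < ((n - i : ℕ) : ℚ) := by rw [Nat.cast_pos]; omega
    have h1 : ((r - i + 1 : ℕ) : ℚ) * ((mh M r (i - 1) : ℤ) : ℚ) ≤
        ((n - i : ℕ) : ℚ) * ((mh M r i : ℤ) : ℚ) := by exact_mod_cast hstep.1
    have h1e : (((r - i + 1 : ℕ) : ℚ) * ((mh M r (i - 1) : ℤ) : ℚ) =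
        ((n - i : ℕ) : ℚ) * ((mh M r i : ℤ) : ℚ)) ↔
        ∀ e ∈ M.E, r + 1 < i + {f | f ∈ M.E ∧ f ∈ M✶.closure {e}}.ncard := by
      rw [← hstep.2]
      exact_mod_cast Iff.rfl
    have hkeyN : (r - i + 1) * ((n - i + 1 - 1).choose (r - i + 1)) =
        (n - i) * ((n - i - 1).choose (r - i)) := by
      have hm := Nat.add_one_mul_choose_eq (n - i - 1) (r - i)
      have e1 : n - i - 1 + 1 = n - i := by omega
      have e2 : n - i + 1 - 1 = n - i - 1 + 1 := by omega
      rw [e1] at hm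
      rw [e2, e1, mul_comm]
      exact hm.symm
    have hkey : ((r - i + 1 : ℕ) : ℚ) * (((n - i + 1 - 1).choose (r - i + 1) : ℕ) : ℚ) =
        ((n - i : ℕ) : ℚ) * (((n - i - 1).choose (r - i) : ℕ) : ℚ) := cast_key _ _ _ _ hkeyN
    have hcomb := combine hD ht hu hkey h1 h1e
      (le_refl ((((n - i - 1).choose (r - i) : ℕ) : ℚ) * ((mh M r i : ℤ) : ℚ)))
      (iff_of_true rfl trivial)
    refine ⟨hcomb.1, ?_⟩
    rw [hcomb.2]
    simp only [and_true]
  · -- inductive step: from j to j + 1, step at k = i - j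
    have hCH := ih hj1 (by omega)
    have hk2 : 2 ≤ i - j := by omega
    have hstep := step_lemma M hfree (i - j) (by omega) (by omega)
    have hidx : i - j - 1 = i - (j + 1) := by omega
    have hc1 : ((r : ℤ) - ((i - j : ℕ) : ℤ) + 1) = ((r - i + j + 1 : ℕ) : ℤ) := by omega
    have hc2 : ((n : ℤ) - ((i - j : ℕ) : ℤ)) = ((n - i + j : ℕ) : ℤ) := by omega
    rw [hidx, hc1, hc2] at hstep
    have ht : (0 : ℚ) < ((r - i + j + 1 : ℕ) : ℚ) := by rw [Nat.cast_pos]; omega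
    have hu : (0 : ℚ) < ((n - i + j : ℕ) : ℚ) := by rw [Nat.cast_pos]; omega
    have h1 : ((r - i + j + 1 : ℕ) : ℚ) * ((mh M r (i - (j + 1)) : ℤ) : ℚ) ≤
        ((n - i + j : ℕ) : ℚ) * ((mh M r (i - j) : ℤ) : ℚ) := by exact_mod_cast hstep.1
    have h1e : (((r - i + j + 1 : ℕ) : ℚ) * ((mh M r (i - (j + 1)) : ℤ) : ℚ) =
        ((n - i + j : ℕ) : ℚ) * ((mh M r (i - j) : ℤ) : ℚ)) ↔
        ∀ e ∈ M.E, r + 1 < (i - j) + {f | f ∈ M.E ∧ f ∈ M✶.closure {e}}.ncard := by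
      rw [← hstep.2]
      exact_mod_cast Iff.rfl
    have hkeyN : (r - i + j + 1) * ((n - i + (j + 1) - 1).choose (r - i + (j + 1))) =
        (n - i + j) * ((n - i + j - 1).choose (r - i + j)) := by
      have hm := Nat.add_one_mul_choose_eq (n - i + j - 1) (r - i + j)
      have e1 : n - i + j - 1 + 1 = n - i + j := by omega
      have e2 : n - i + (j + 1) - 1 = n - i + j - 1 + 1 := by omega
      have e3 : r - i + (j + 1) = (r - i + j) + 1 := by omega
      rw [e1] at hm
      rw [e2, e1, e3, mul_comm]
      exact hm.symm
    have hkey : ((r - i + j + 1 : ℕ) : ℚ) *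
          (((n - i + (j + 1) - 1).choose (r - i + (j + 1)) : ℕ) : ℚ) =
        ((n - i + j : ℕ) : ℚ) * (((n - i + j - 1).choose (r - i + j) : ℕ) : ℚ) :=
      cast_key _ _ _ _ hkeyN
    have hcomb := combine hD ht hu hkey h1 h1e hCH.1 hCH.2
    refine ⟨hcomb.1, ?_⟩
    rw [hcomb.2]
    constructor
    · rintro ⟨ha, hb⟩ e heE
      have := ha e heE
      omega
    · intro hall
      constructor
      · intro e heE
        have := hall e heE
        omega
      · intro e heE
        have := hall e heE
        omega

open Set Matroid

lemma series_iff [Finite α] (M : Matroid α) (hfree : ∀ f, ¬ f ∈ M✶.closure ∅) (t : ℕ) :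
    (∀ S : Set α, mSerClass M S → t < S.ncard) ↔
      (∀ e ∈ M.E, t < {f | f ∈ M.E ∧ f ∈ M✶.closure {e}}.ncard) := by
  have hset : ∀ e : α, {f | f ∈ M✶.E ∧ ¬ mLoop M✶ f ∧ f ∈ M✶.closure {e}} =
      {f | f ∈ M.E ∧ f ∈ M✶.closure {e}} := by
    intro e
    ext f
    simp only [Set.mem_setOf_eq, dual_ground]
    have := hfree f
    exact ⟨fun h => ⟨h.1, h.2.2⟩, fun h => ⟨h.1, this, h.2⟩⟩
  constructor
  · intro h e heE
    have hS : mSerClass M {f | f ∈ M✶.E ∧ ¬ mLoop M✶ f ∧ f ∈ M✶.closure {e}} :=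
      ⟨e, by simpa using heE, hfree e, rfl⟩
    have := h _ hS
    rwa [hset] at this
  · intro h S hS
    obtain ⟨e, heE, -, rfl⟩ := hS
    rw [hset]
    exact h e (by simpa using heE)


end Work

/-- if `M` is a rank-`r` matroid on `n` elements without coloops, then
for `1 ≤ j < i ≤ r`,
`h_{i-j}(M) ≤ [C(n-i+j-1, r-i+j) / C(n-i-1, r-i)]·h_i(M)`, with equality if and only
if every series class of `M` has cardinality greater than `r-i+j`. -/
theorem stmt15 [Fintype α] (M : Matroid α) (r n : ℕ) (hr : mr M M.E = r)
    (hn : M.E.ncard = n) (hcl : ∀ e, ¬ mColoop M e)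
    (i j : ℕ) (hj : 1 ≤ j) (hji : j < i) (hi : i ≤ r) :
    ((mh M r (i - j) : ℚ) ≤
        (((n - i + j - 1).choose (r - i + j) : ℚ) / ((n - i - 1).choose (r - i) : ℚ)) *
          (mh M r i : ℚ)) ∧
      (((mh M r (i - j) : ℚ) =
          (((n - i + j - 1).choose (r - i + j) : ℚ) / ((n - i - 1).choose (r - i) : ℚ)) *
            (mh M r i : ℚ)) ↔
        ∀ S : Set α, mSerClass M S → r - i + j < S.ncard) := by
  subst hr hn
  have hfree : ∀ f, ¬ f ∈ M✶.closure ∅ := hcl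
  set r := mr M M.E with hrdef
  set n := M.E.ncard with hndef
  have hCH := Work.chain M hfree i hi j hj hji
  have hρ : 1 ≤ r := by omega
  have hnr : r + 1 ≤ n := Work.n_ge_r_succ hfree hρ
  have hD : (0 : ℚ) < (((n - i - 1).choose (r - i) : ℕ) : ℚ) := by
    rw [Nat.cast_pos]
    exact Nat.choose_pos (by omega)
  have hser := Work.series_iff M hfree (r - i + j)
  have key : ∀ X Y : ℚ,
      (X = (((n - i + j - 1).choose (r - i + j) : ℕ) : ℚ) /
          (((n - i - 1).choose (r - i) : ℕ) : ℚ) * Y) ↔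
        ((((n - i - 1).choose (r - i) : ℕ) : ℚ) * X =
          (((n - i + j - 1).choose (r - i + j) : ℕ) : ℚ) * Y) := by
    intro X Y
    rw [div_mul_eq_mul_div, eq_div_iff hD.ne']
    constructor
    · intro h; linarith
    · intro h; linarith
  constructor
  · rw [div_mul_eq_mul_div, le_div_iff₀ hD]
    linarith [hCH.1]
  · rw [key, hCH.2, hser]
    constructor
    · intro h e heE
      have := h e heE
      omega
    · intro h e heE
      have := h e heE
      omega
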